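/- Let J : ℝⁿ → ℝ be twice continuously differentiable with M-Lipschitz Hessian. Then for all θ, d, g ∈ ℝⁿ and all n×n real matrices H and H̃, ‖∇J(θ + d)‖ ≤ (M/2)‖d‖² + ‖∇J(θ) − g‖ + ‖∇²J(θ) − H‖·‖d‖ + ‖g + H̃d‖ + ‖(H̃ − H)d‖. -/

import Mathlib

set_option maxHeartbeats 800000
set_option synthInstance.maxHeartbeats 200000

open RealInnerProductSpace

open Set in
lemma taylor_grad_bound {n : ℕ} (M : ℝ)
    (G : EuclideanSpace ℝ (Fin n) → EuclideanSpace ℝ (Fin n))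
    (hG : ∀ x, HasFDerivAt G (fderiv ℝ G x) x)
    (hLip : ∀ θ₁ θ₂ : EuclideanSpace ℝ (Fin n),
      ‖fderiv ℝ G θ₁ - fderiv ℝ G θ₂‖ ≤ M * ‖θ₁ - θ₂‖)
    (θ d : EuclideanSpace ℝ (Fin n)) :
    ‖G (θ + d) - G θ - fderiv ℝ G θ d‖ ≤ (M / 2) * ‖d‖ ^ 2 := by
  set A := fderiv ℝ G θ with hA
  set φ : ℝ → EuclideanSpace ℝ (Fin n) := fun t => G (θ + t • d) - G θ - t • (A d) with hφ
  have hφ' : ∀ t : ℝ, HasDerivAt φ (fderiv ℝ G (θ + t • d) d - A d) t := by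
    intro t
    have h1 : HasDerivAt (fun t : ℝ => θ + t • d) d t := by
      simpa using ((hasDerivAt_id t).smul_const d).const_add θ
    have h2 : HasDerivAt (fun t : ℝ => G (θ + t • d)) (fderiv ℝ G (θ + t • d) d) t :=
      (hG (θ + t • d)).comp_hasDerivAt t h1
    have h3 : HasDerivAt (fun t : ℝ => t • (A d)) (A d) t := by
      simpa using (hasDerivAt_id t).smul_const (A d)
    exact (h2.sub_const (G θ)).sub h3
  have hcont : ContinuousOn φ (Icc (0:ℝ) 1) :=
    fun t _ => (hφ' t).continuousAt.continuousWithinAt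
  have hder : ∀ t ∈ Ico (0:ℝ) 1,
      HasDerivWithinAt φ (fderiv ℝ G (θ + t • d) d - A d) (Ici t) t :=
    fun t _ => (hφ' t).hasDerivWithinAt
  have ha : ‖φ 0‖ ≤ (M / 2) * ‖d‖ ^ 2 * 0 ^ 2 := by simp [hφ]
  have hB : ∀ t : ℝ, HasDerivAt (fun t : ℝ => (M / 2) * ‖d‖ ^ 2 * t ^ 2) (M * ‖d‖ ^ 2 * t) t := by
    intro t
    have := (hasDerivAt_pow 2 t).const_mul ((M / 2) * ‖d‖ ^ 2)
    exact this.congr_deriv (by push_cast; ring)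
  have bound : ∀ t ∈ Ico (0:ℝ) 1,
      ‖fderiv ℝ G (θ + t • d) d - A d‖ ≤ M * ‖d‖ ^ 2 * t := by
    intro t ht
    have hb : ‖fderiv ℝ G (θ + t • d) d - A d‖ ≤ ‖fderiv ℝ G (θ + t • d) - A‖ * ‖d‖ := by
      have h := (fderiv ℝ G (θ + t • d) - A).le_opNorm d
      rwa [ContinuousLinearMap.sub_apply] at h
    have hl : ‖fderiv ℝ G (θ + t • d) - A‖ ≤ M * (t * ‖d‖) := by
      have h := hLip (θ + t • d) θ
      simpa [norm_smul, abs_of_nonneg ht.1] using h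
    calc ‖fderiv ℝ G (θ + t • d) d - A d‖ ≤ (M * (t * ‖d‖)) * ‖d‖ :=
          hb.trans (mul_le_mul_of_nonneg_right hl (norm_nonneg d))
      _ = M * ‖d‖ ^ 2 * t := by ring
  have key := image_norm_le_of_norm_deriv_right_le_deriv_boundary hcont hder ha hB bound
    (x := 1) (by norm_num)
  simpa [hφ] using key

/-- **Gradient norm bound at the next iterate.** If `J : ℝⁿ → ℝ` is `C²` with `M`-Lipschitz
Hessian, then for any inexact gradient `g`, inexact Hessian `H` and projected inexact
Hessian `H̃`,
`‖∇J(θ+d)‖ ≤ (M/2)‖d‖² + ‖∇J(θ) − g‖ + ‖∇²J(θ) − H‖‖d‖ + ‖g + H̃d‖ + ‖(H̃ − H)d‖`. -/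
theorem gradient_norm_bound_next_iterate {n : ℕ} (M : ℝ)
    (J : EuclideanSpace ℝ (Fin n) → ℝ)
    (hJ : ContDiff ℝ 2 J)
    (hLip : ∀ θ₁ θ₂ : EuclideanSpace ℝ (Fin n),
      ‖fderiv ℝ (gradient J) θ₁ - fderiv ℝ (gradient J) θ₂‖ ≤ M * ‖θ₁ - θ₂‖)
    (θ d g : EuclideanSpace ℝ (Fin n))
    (H Htil : EuclideanSpace ℝ (Fin n) →L[ℝ] EuclideanSpace ℝ (Fin n)) :
    ‖gradient J (θ + d)‖
      ≤ (M / 2) * ‖d‖ ^ 2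
        + ‖gradient J θ - g‖
        + ‖fderiv ℝ (gradient J) θ - H‖ * ‖d‖
        + ‖g + Htil d‖
        + ‖(Htil - H) d‖ := by
  set G := gradient J with hGdef
  have hGdiff : ∀ x, HasFDerivAt G (fderiv ℝ G x) x := by
    have h1 : Differentiable ℝ G := by
      have heq : G = fun x => (InnerProductSpace.toDual ℝ _).symm (fderiv ℝ J x) := by
        funext x; rfl
      rw [heq]
      have hf : Differentiable ℝ (fderiv ℝ J) :=
        (hJ.fderiv_right (m := 1) (by norm_num)).differentiable (by norm_num)
      exact (InnerProductSpace.toDual ℝ _).symm.toContinuousLinearEquiv.differentiable.comp hf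
    exact fun x => (h1 x).hasFDerivAt
  have taylor := taylor_grad_bound M G hGdiff hLip θ d
  set A := fderiv ℝ G θ with hA
  have decomp : G (θ + d) =
      (G (θ + d) - G θ - A d) + (G θ - g) + ((A - H) d) + (g + Htil d) - ((Htil - H) d) := by
    simp only [ContinuousLinearMap.sub_apply]
    abel
  set x1 := G (θ + d) - G θ - A d
  set x2 := G θ - g
  set x3 := (A - H) d
  set x4 := g + Htil d
  set x5 := (Htil - H) d
  have htri : ‖G (θ + d)‖ ≤ ‖x1‖ + ‖x2‖ + ‖x3‖ + ‖x4‖ + ‖x5‖ := by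
    rw [decomp]
    calc ‖x1 + x2 + x3 + x4 - x5‖ ≤ ‖x1 + x2 + x3 + x4‖ + ‖x5‖ := norm_sub_le _ _
      _ ≤ (‖x1 + x2 + x3‖ + ‖x4‖) + ‖x5‖ := add_le_add_left (norm_add_le _ _) _
      _ ≤ ((‖x1 + x2‖ + ‖x3‖) + ‖x4‖) + ‖x5‖ :=
          add_le_add_left (add_le_add_left (norm_add_le _ _) _) _
      _ ≤ (((‖x1‖ + ‖x2‖) + ‖x3‖) + ‖x4‖) + ‖x5‖ :=
          add_le_add_left (add_le_add_left (add_le_add_left (norm_add_le _ _) _) _) _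
  refine htri.trans ?_
  have hop : ‖(A - H) d‖ ≤ ‖A - H‖ * ‖d‖ := (A - H).le_opNorm d
  have := add_le_add_left (add_le_add_left (add_le_add
    (add_le_add taylor (le_refl ‖x2‖)) hop) ‖x4‖) ‖x5‖
  exact this
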